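/- For every β ∈ ℝ^p, both log PL and log P̃L are differentiable at β and ‖∇[log PL(β)] − ∇[log P̃L(β)]‖ ≤ K · exp(4 K ‖β‖) · Σ_{m=1}^n |J_m|² (|J_m| − 1) / |𝒥_m|. -/

import Mathlib

open scoped RealInnerProductSpace BigOperators

open Finset


section grad0
open InnerProductSpace
variable {F : Type*} [NormedAddCommGroup F] [InnerProductSpace ℝ F] [CompleteSpace F] {β : F}

lemma myGrad_inner (v : F) (β : F) : HasGradientAt (fun y : F => ⟪y, v⟫) v β := by
  show HasFDerivAt _ _ _
  exact ((toDual ℝ F v) : F →L[ℝ] ℝ).hasFDerivAt.congr_of_eventuallyEq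
    (Filter.Eventually.of_forall fun y => by simp [real_inner_comm])

lemma myGrad_sum {κ : Type*} (t : Finset κ) (f : κ → F → ℝ) (g : κ → F)
    (h : ∀ i ∈ t, HasGradientAt (f i) (g i) β) :
    HasGradientAt (fun y => ∑ i ∈ t, f i y) (∑ i ∈ t, g i) β := by
  show HasFDerivAt _ _ _
  have := HasFDerivAt.sum (fun i hi => (h i hi : HasFDerivAt _ _ _))
  convert this using 1
  all_goals first | rfl | exact map_sum (toDual ℝ F) g t | (funext y; simp)

lemma myGrad_sub {f g : F → ℝ} {gf gg : F} (hf : HasGradientAt f gf β)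
    (hg : HasGradientAt g gg β) : HasGradientAt (fun y => f y - g y) (gf - gg) β := by
  show HasFDerivAt _ _ _
  have := (hf.hasFDerivAt.sub hg.hasFDerivAt)
  convert this using 1
  all_goals first | rfl | exact map_sub (toDual ℝ F) gf gg

lemma myGrad_const_mul {f : F → ℝ} {gf : F} (c : ℝ) (hf : HasGradientAt f gf β) :
    HasGradientAt (fun y => c * f y) (c • gf) β := by
  show HasFDerivAt _ _ _
  have := hf.hasFDerivAt.const_mul c
  convert this using 1
  all_goals first | rfl | exact map_smul (toDual ℝ F) c gf

lemma myGrad_comp {f : F → ℝ} {gf : F} {h : ℝ → ℝ} {h' : ℝ}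
    (hh : HasDerivAt h h' (f β)) (hf : HasGradientAt f gf β) :
    HasGradientAt (fun y => h (f y)) (h' • gf) β := by
  show HasFDerivAt _ _ _
  have := hh.comp_hasFDerivAt β hf.hasFDerivAt
  convert this using 1
  all_goals first | rfl | exact map_smul (toDual ℝ F) h' gf

lemma myGrad_lse {σ : Type*} (t : Finset σ) (ht : t.Nonempty) (v : σ → F) (β : F) :
    HasGradientAt (fun y => Real.log (∑ s ∈ t, Real.exp ⟪y, v s⟫))
      ((∑ s ∈ t, Real.exp ⟪β, v s⟫)⁻¹ • ∑ s ∈ t, Real.exp ⟪β, v s⟫ • v s) β := by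
  have hsum : HasGradientAt (fun y => ∑ s ∈ t, Real.exp ⟪y, v s⟫)
      (∑ s ∈ t, Real.exp ⟪β, v s⟫ • v s) β :=
    myGrad_sum t _ _ (fun s _ => myGrad_comp (Real.hasDerivAt_exp _) (myGrad_inner (v s) β))
  have hpos : 0 < ∑ s ∈ t, Real.exp ⟪β, v s⟫ :=
    Finset.sum_pos (fun s _ => Real.exp_pos _) ht
  exact myGrad_comp (Real.hasDerivAt_log hpos.ne') hsum

end grad0

-- swap lemma: for i ≠ j,
-- ∑_{S∈P, j∈S, i∉S} a i * ∏_{l∈S} a l = ∑_{S∈P, i∈S, j∉S} a j * ∏_{l∈S} a l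
lemma swap_sum {ι : Type*} [Fintype ι] [DecidableEq ι] (a : ι → ℝ) (k : ℕ) {i j : ι} (hij : i ≠ j) :
    ∑ S ∈ (Finset.powersetCard k (univ : Finset ι)).filter (fun S => j ∈ S ∧ i ∉ S),
        a i * ∏ l ∈ S, a l
    = ∑ S ∈ (Finset.powersetCard k (univ : Finset ι)).filter (fun S => i ∈ S ∧ j ∉ S),
        a j * ∏ l ∈ S, a l := by
  refine Finset.sum_nbij' (fun S => insert i (S.erase j)) (fun S => insert j (S.erase i)) ?_ ?_ ?_ ?_ ?_
  · intro S hS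
    simp only [Finset.mem_filter, Finset.mem_powersetCard] at hS ⊢
    obtain ⟨⟨hSu, hcard⟩, hjS, hiS⟩ := hS
    have hie : i ∉ S.erase j := fun h => hiS (Finset.mem_of_mem_erase h)
    refine ⟨⟨Finset.subset_univ _, ?_⟩, Finset.mem_insert_self _ _, ?_⟩
    · rw [Finset.card_insert_of_notMem hie, Finset.card_erase_of_mem hjS, hcard]
      exact Nat.succ_pred_eq_of_pos (hcard ▸ Finset.card_pos.mpr ⟨j, hjS⟩)
    · simp [hij.symm, Finset.mem_erase]
  · intro S hS
    simp only [Finset.mem_filter, Finset.mem_powersetCard] at hS ⊢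
    obtain ⟨⟨hSu, hcard⟩, hiS, hjS⟩ := hS
    have hje : j ∉ S.erase i := fun h => hjS (Finset.mem_of_mem_erase h)
    refine ⟨⟨Finset.subset_univ _, ?_⟩, Finset.mem_insert_self _ _, ?_⟩
    · rw [Finset.card_insert_of_notMem hje, Finset.card_erase_of_mem hiS, hcard]
      exact Nat.succ_pred_eq_of_pos (hcard ▸ Finset.card_pos.mpr ⟨i, hiS⟩)
    · simp [hij, Finset.mem_erase]
  · intro S hS
    simp only [Finset.mem_filter, Finset.mem_powersetCard] at hS
    obtain ⟨_, hjS, hiS⟩ := hS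
    have hie : i ∉ S.erase j := fun h => hiS (Finset.mem_of_mem_erase h)
    show insert j ((insert i (S.erase j)).erase i) = S
    rw [Finset.erase_insert hie, Finset.insert_erase hjS]
  · intro S hS
    simp only [Finset.mem_filter, Finset.mem_powersetCard] at hS
    obtain ⟨_, hiS, hjS⟩ := hS
    have hje : j ∉ S.erase i := fun h => hjS (Finset.mem_of_mem_erase h)
    show insert i ((insert j (S.erase i)).erase j) = S
    rw [Finset.erase_insert hje, Finset.insert_erase hiS]
  · intro S hS
    simp only [Finset.mem_filter, Finset.mem_powersetCard] at hS
    obtain ⟨_, hjS, hiS⟩ := hS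
    have hie : i ∉ S.erase j := fun h => hiS (Finset.mem_of_mem_erase h)
    rw [Finset.prod_insert hie, ← Finset.mul_prod_erase S a hjS]
    ring

set_option maxHeartbeats 1600000 in
lemma key_bound {F : Type*} [NormedAddCommGroup F] [InnerProductSpace ℝ F]
    {ι : Type*} [Fintype ι] [DecidableEq ι] (K : ℝ) (hK : 0 ≤ K)
    (x : ι → F) (hx : ∀ j, ‖x j‖ ≤ K) (Q : Finset ι) (hQ : Q.Nonempty) (β : F) :
    ‖((∑ S ∈ Finset.powersetCard Q.card Finset.univ, Real.exp ⟪β, ∑ j ∈ S, x j⟫)⁻¹ •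
        ∑ S ∈ Finset.powersetCard Q.card Finset.univ, Real.exp ⟪β, ∑ j ∈ S, x j⟫ • ∑ j ∈ S, x j) -
      (Q.card : ℝ) • ((∑ j, Real.exp ⟪β, x j⟫)⁻¹ • ∑ j, Real.exp ⟪β, x j⟫ • x j)‖
    ≤ K * Real.exp (4 * K * ‖β‖) *
        ((Q.card : ℝ) ^ 2 * ((Q.card : ℝ) - 1) / (Fintype.card ι : ℝ)) := by
  set a : ι → ℝ := fun j => Real.exp ⟪β, x j⟫ with ha_def
  set k := Q.card with hk_def
  set P := Finset.powersetCard k (univ : Finset ι) with hP_def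
  have hQP : Q ∈ P := Finset.mem_powersetCard.2 ⟨Finset.subset_univ Q, rfl⟩
  have hk1 : 1 ≤ k := Nat.one_le_iff_ne_zero.2 (fun h => by
    exact absurd (Finset.card_eq_zero.1 h) hQ.ne_empty)
  have hexp : ∀ S : Finset ι, Real.exp ⟪β, ∑ j ∈ S, x j⟫ = ∏ l ∈ S, a l := by
    intro S; rw [inner_sum, Real.exp_sum]
  have hkcS : ∀ S ∈ P, S.card = k := fun S hS => (Finset.mem_powersetCard.1 hS).2
  -- bounds on a
  have hM : ∀ j, a j ≤ Real.exp (K * ‖β‖) := by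
    intro j
    apply Real.exp_le_exp.2
    calc ⟪β, x j⟫ ≤ ‖β‖ * ‖x j‖ := real_inner_le_norm β (x j)
    _ ≤ ‖β‖ * K := by have := hx j; nlinarith [norm_nonneg β]
    _ = K * ‖β‖ := mul_comm _ _
  have hm : ∀ j, Real.exp (-(K * ‖β‖)) ≤ a j := by
    intro j
    apply Real.exp_le_exp.2
    have h1 : -⟪β, x j⟫ ≤ ‖β‖ * ‖x j‖ := by
      have := real_inner_le_norm β (-(x j)); simpa using this
    have := hx j; nlinarith [norm_nonneg β]
  have hapos : ∀ j, 0 < a j := fun j => Real.exp_pos _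
  set Zex := ∑ S ∈ P, ∏ l ∈ S, a l with hZex_def
  set Zap := ∑ j, a j with hZap_def
  have hZexpos : 0 < Zex :=
    Finset.sum_pos (fun S _ => Finset.prod_pos fun l _ => hapos l) ⟨Q, hQP⟩
  have huniv : (univ : Finset ι).Nonempty := ⟨hQ.choose, Finset.mem_univ _⟩
  have hZappos : 0 < Zap := Finset.sum_pos (fun j _ => hapos j) huniv
  set A : ι → ℝ := fun j => ∑ S ∈ P, if j ∈ S then ∏ l ∈ S, a l else 0 with hA_def
  set E : ι → ι → ℝ := fun i j => ∑ S ∈ P, if i ∈ S ∧ j ∈ S then ∏ l ∈ S, a l else 0 with hE_def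
  set c : ι → ℝ := fun j => Zex⁻¹ * A j - (k : ℝ) * (Zap⁻¹ * a j) with hc_def
  -- Step A : the difference is ∑ j, c j • x j
  have hvec1 : ∑ S ∈ P, (∏ l ∈ S, a l) • ∑ j ∈ S, x j = ∑ j, A j • x j := by
    have h1 : ∀ S ∈ P, (∏ l ∈ S, a l) • ∑ j ∈ S, x j
        = ∑ j, (if j ∈ S then (∏ l ∈ S, a l) • x j else 0) := by
      intro S _
      rw [Finset.smul_sum, Finset.sum_ite_mem, Finset.univ_inter]
    rw [Finset.sum_congr rfl h1, Finset.sum_comm]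
    refine Finset.sum_congr rfl fun j _ => ?_
    rw [hA_def]
    simp only [Finset.sum_smul, ite_smul, zero_smul]
  have hstepA :
      (Zex⁻¹ • ∑ S ∈ P, Real.exp ⟪β, ∑ j ∈ S, x j⟫ • ∑ j ∈ S, x j) -
        (k : ℝ) • (Zap⁻¹ • ∑ j, a j • x j) = ∑ j, c j • x j := by
    have h2 : ∑ S ∈ P, Real.exp ⟪β, ∑ j ∈ S, x j⟫ • ∑ j ∈ S, x j
        = ∑ S ∈ P, (∏ l ∈ S, a l) • ∑ j ∈ S, x j := by
      refine Finset.sum_congr rfl fun S _ => by rw [hexp]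
    rw [h2, hvec1, Finset.smul_sum, Finset.smul_sum, Finset.smul_sum, ← Finset.sum_sub_distrib]
    refine Finset.sum_congr rfl fun j _ => ?_
    rw [hc_def, smul_smul, smul_smul, smul_smul, sub_smul, mul_assoc]
  set D : ι → ℝ := fun j => Zap * A j - (k : ℝ) * a j * Zex with hD_def
  have hAsum : ∑ i, A i = (k : ℝ) * Zex := by
    rw [hA_def, Finset.sum_comm, hZex_def, Finset.mul_sum]
    refine Finset.sum_congr rfl fun S hS => ?_
    rw [Finset.sum_ite_mem, Finset.univ_inter, Finset.sum_const, hkcS S hS, nsmul_eq_mul]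
  have hDsum : ∀ j, D j = ∑ i, (a i * A j - a j * A i) := by
    intro j
    rw [Finset.sum_sub_distrib, ← Finset.sum_mul, ← Finset.mul_sum, hAsum, hD_def, ← hZap_def]
    ring
  have hsplit : ∀ (i j : ι) (cS : Finset ι → ℝ),
      (∑ S ∈ P, if j ∈ S then cS S else 0)
      = (∑ S ∈ P, if i ∈ S ∧ j ∈ S then cS S else 0)
        + ∑ S ∈ P.filter (fun S => j ∈ S ∧ i ∉ S), cS S := by
    intro i j cS
    rw [Finset.sum_filter, ← Finset.sum_add_distrib]
    refine Finset.sum_congr rfl fun S _ => ?_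
    by_cases h1 : i ∈ S <;> by_cases h2 : j ∈ S <;> simp [h1, h2]
  have hswap2 : ∀ i j : ι, i ≠ j → a i * A j - a j * A i = (a i - a j) * E i j := by
    intro i j hij
    have e1 : a i * A j = a i * E i j
        + ∑ S ∈ P.filter (fun S => j ∈ S ∧ i ∉ S), a i * ∏ l ∈ S, a l := by
      rw [hA_def, hE_def]
      simp only [Finset.mul_sum, mul_ite, mul_zero]
      exact hsplit i j _
    have e2 : a j * A i = a j * E i j
        + ∑ S ∈ P.filter (fun S => i ∈ S ∧ j ∉ S), a j * ∏ l ∈ S, a l := by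
      rw [hA_def, hE_def]
      simp only [Finset.mul_sum, mul_ite, mul_zero]
      have h := hsplit j i (fun S => a j * ∏ l ∈ S, a l)
      rw [h]
      congr 1
      refine Finset.sum_congr rfl fun S _ => ?_
      by_cases h1 : i ∈ S <;> by_cases h2 : j ∈ S <;> simp [h1, h2]
    have e3 := swap_sum a k hij
    rw [← hP_def] at e3
    rw [e1, e2, e3]
    ring
  have hEnn : ∀ i j, 0 ≤ E i j := by
    intro i j
    refine Finset.sum_nonneg fun S _ => ?_
    by_cases h : i ∈ S ∧ j ∈ S
    · simp only [h, if_pos]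
      exact le_of_lt (Finset.prod_pos fun l _ => hapos l)
    · simp [h]
  set M := Real.exp (K * ‖β‖) with hM_def
  have hMpos : 0 < M := Real.exp_pos _
  have habsD : ∀ j, |D j| ≤ M * ∑ i, (if i = j then 0 else E i j) := by
    intro j
    rw [hDsum j, Finset.mul_sum]
    refine (Finset.abs_sum_le_sum_abs _ _).trans (Finset.sum_le_sum fun i _ => ?_)
    by_cases h : i = j
    · subst h; simp
    · rw [hswap2 i j h, abs_mul, abs_of_nonneg (hEnn i j), if_neg h]
      refine mul_le_mul_of_nonneg_right ?_ (hEnn i j)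
      rw [abs_le]
      constructor
      · have h1 := hapos i; have h2 := hM j; linarith
      · have h1 := hapos j; have h2 := hM i; linarith
  have hper : ∀ S ∈ P, ∀ (t : ℝ), (∑ i, if i ∈ S then t else 0) = (k : ℝ) * t := by
    intro S hS t
    rw [Finset.sum_ite_mem, Finset.univ_inter, Finset.sum_const, hkcS S hS, nsmul_eq_mul]
  have h2 : ∑ j, ∑ i, E i j = (k : ℝ) ^ 2 * Zex := by
    have hinner : ∀ j, ∑ i, E i j = ∑ S ∈ P, (if j ∈ S then (k : ℝ) * ∏ l ∈ S, a l else 0) := by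
      intro j
      rw [hE_def, Finset.sum_comm]
      refine Finset.sum_congr rfl fun S hS => ?_
      by_cases h : j ∈ S
      · simp only [h, and_true, if_pos]
        rw [hper S hS]
      · simp [h]
    rw [Finset.sum_congr rfl fun j _ => hinner j, Finset.sum_comm, hZex_def, Finset.mul_sum]
    refine Finset.sum_congr rfl fun S hS => ?_
    rw [hper S hS]
    ring
  have h3 : ∑ j, E j j = (k : ℝ) * Zex := by
    have hinner : ∀ j, E j j = ∑ S ∈ P, (if j ∈ S then ∏ l ∈ S, a l else 0) := by
      intro j
      rw [hE_def]
      refine Finset.sum_congr rfl fun S _ => ?_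
      by_cases h : j ∈ S <;> simp [h]
    rw [Finset.sum_congr rfl fun j _ => hinner j, Finset.sum_comm, hZex_def, Finset.mul_sum]
    exact Finset.sum_congr rfl fun S hS => hper S hS _
  have hcount : ∑ j, ∑ i, (if i = j then 0 else E i j) = ((k : ℝ) ^ 2 - k) * Zex := by
    have h1 : ∀ j, ∑ i, (if i = j then 0 else E i j) = (∑ i, E i j) - E j j := by
      intro j
      have hpt : ∀ i : ι, (if i = j then 0 else E i j)
          = E i j - (if i = j then E i j else 0) := by
        intro i; by_cases h : i = j <;> simp [h]
      rw [Finset.sum_congr rfl fun i _ => hpt i, Finset.sum_sub_distrib]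
      congr 1
      rw [Finset.sum_ite_eq' univ j (fun i => E i j), if_pos (Finset.mem_univ j)]
    rw [Finset.sum_congr rfl fun j _ => h1 j, Finset.sum_sub_distrib, h2, h3]
    ring
  -- putting it together
  have hcD : ∀ j, c j = D j / (Zex * Zap) := by
    intro j
    rw [hc_def, hD_def, eq_div_iff (mul_pos hZexpos hZappos).ne']
    have hz1 : Zex⁻¹ * Zex = 1 := inv_mul_cancel₀ hZexpos.ne'
    have hz2 : Zap⁻¹ * Zap = 1 := inv_mul_cancel₀ hZappos.ne'
    linear_combination (A j * Zap) * hz1 - ((k : ℝ) * a j * Zex) * hz2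
  have hsumc : ∑ j, |c j| ≤ M * ((k : ℝ) ^ 2 - k) / Zap := by
    have : ∀ j, |c j| = |D j| / (Zex * Zap) := by
      intro j
      rw [hcD j, abs_div, abs_of_pos (mul_pos hZexpos hZappos)]
    rw [Finset.sum_congr rfl fun j _ => this j, ← Finset.sum_div]
    rw [div_le_div_iff₀ (mul_pos hZexpos hZappos) hZappos]
    have hDtot : ∑ j, |D j| ≤ M * (((k : ℝ) ^ 2 - k) * Zex) := by
      calc ∑ j, |D j| ≤ ∑ j, M * ∑ i, (if i = j then 0 else E i j) :=
            Finset.sum_le_sum fun j _ => habsD j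
        _ = M * (((k : ℝ) ^ 2 - k) * Zex) := by rw [← Finset.mul_sum, hcount]
    calc (∑ j, |D j|) * Zap ≤ (M * (((k : ℝ) ^ 2 - k) * Zex)) * Zap :=
          mul_le_mul_of_nonneg_right hDtot hZappos.le
      _ = M * ((k : ℝ) ^ 2 - k) * (Zex * Zap) := by ring
  have hkr : (1 : ℝ) ≤ (k : ℝ) := by exact_mod_cast hk1
  have hNpos : 0 < (Fintype.card ι : ℝ) := by
    have := Fintype.card_pos_iff.2 ⟨hQ.choose⟩
    exact_mod_cast this
  have hZapN : (Fintype.card ι : ℝ) * Real.exp (-(K * ‖β‖)) ≤ Zap := by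
    have := Finset.card_nsmul_le_sum univ a (Real.exp (-(K * ‖β‖))) (fun j _ => hm j)
    rw [nsmul_eq_mul, Finset.card_univ] at this
    exact this
  have hkk : (0 : ℝ) ≤ (k : ℝ) ^ 2 - k := by nlinarith
  have hsumc2 : ∑ j, |c j| ≤ Real.exp (2 * K * ‖β‖) * ((k : ℝ) ^ 2 - k) / (Fintype.card ι : ℝ) := by
    refine hsumc.trans ?_
    have hx1 : M * ((k : ℝ) ^ 2 - k) / Zap
        ≤ M * ((k : ℝ) ^ 2 - k) / ((Fintype.card ι : ℝ) * Real.exp (-(K * ‖β‖))) := by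
      exact div_le_div_of_nonneg_left (mul_nonneg hMpos.le hkk)
        (mul_pos hNpos (Real.exp_pos _)) hZapN
    refine hx1.trans (le_of_eq ?_)
    have hM2 : M ^ 2 = Real.exp (2 * K * ‖β‖) := by
      rw [hM_def, sq, ← Real.exp_add]
      congr 1
      ring
    rw [Real.exp_neg, ← div_eq_mul_inv, div_div_eq_mul_div]
    rw [div_eq_div_iff hNpos.ne' hNpos.ne']
    linear_combination ((k : ℝ) ^ 2 - k) * (Fintype.card ι : ℝ) * hM2
  -- final norm bound
  have hZeq : (∑ S ∈ P, Real.exp ⟪β, ∑ j ∈ S, x j⟫) = Zex :=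
    Finset.sum_congr rfl fun S _ => hexp S
  rw [hZeq]
  have hre : Zex⁻¹ • (∑ S ∈ P, Real.exp ⟪β, ∑ j ∈ S, x j⟫ • ∑ j ∈ S, x j)
      - (k : ℝ) • ((∑ j, Real.exp ⟪β, x j⟫)⁻¹ • ∑ j, Real.exp ⟪β, x j⟫ • x j)
      = ∑ j, c j • x j := hstepA
  rw [hre]
  have ht : 0 ≤ K * ‖β‖ := mul_nonneg hK (norm_nonneg β)
  have he : Real.exp (2 * K * ‖β‖) ≤ Real.exp (4 * K * ‖β‖) :=
    Real.exp_le_exp.2 (by nlinarith)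
  have hpoly : (k : ℝ) ^ 2 - k ≤ (k : ℝ) ^ 2 * ((k : ℝ) - 1) := by nlinarith
  calc ‖∑ j, c j • x j‖ ≤ ∑ j, ‖c j • x j‖ := norm_sum_le _ _
    _ ≤ ∑ j, |c j| * K := by
        refine Finset.sum_le_sum fun j _ => ?_
        rw [norm_smul, Real.norm_eq_abs]
        exact mul_le_mul_of_nonneg_left (hx j) (abs_nonneg _)
    _ = K * ∑ j, |c j| := by rw [← Finset.sum_mul]; ring
    _ ≤ K * (Real.exp (2 * K * ‖β‖) * ((k : ℝ) ^ 2 - k) / (Fintype.card ι : ℝ)) :=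
        mul_le_mul_of_nonneg_left hsumc2 hK
    _ ≤ K * Real.exp (4 * K * ‖β‖) * ((k : ℝ) ^ 2 * ((k : ℝ) - 1) / (Fintype.card ι : ℝ)) := by
        rw [show K * Real.exp (4 * K * ‖β‖) * ((k : ℝ) ^ 2 * ((k : ℝ) - 1) / (Fintype.card ι : ℝ))
            = K * (Real.exp (4 * K * ‖β‖) * ((k : ℝ) ^ 2 * ((k : ℝ) - 1)) / (Fintype.card ι : ℝ))
            from by ring]
        refine mul_le_mul_of_nonneg_left ?_ hK
        rw [div_le_div_iff₀ hNpos hNpos]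
        have he2 := (Real.exp_pos (2 * K * ‖β‖)).le
        have he4 := (Real.exp_pos (4 * K * ‖β‖)).le
        nlinarith [mul_le_mul he hpoly hkk he4]

/-- With bounded covariates `‖x_m(j)‖ ≤ K`, the exact multicast log partial
likelihood and its duplication approximation are differentiable at every `β`,
and their gradients differ by at most
`K·exp(4K‖β‖)·Σ_m |J_m|²(|J_m|−1)/|𝒥_m|`. -/
theorem grad_logPL_approx_bound
    {p n : ℕ} (K : ℝ) (hK : 0 ≤ K)
    {J : Fin n → Type*} [∀ m, Fintype (J m)] [∀ m, Nonempty (J m)]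
    (x : (m : Fin n) → J m → EuclideanSpace ℝ (Fin p))
    (hx : ∀ m j, ‖x m j‖ ≤ K)
    (Jm : (m : Fin n) → Finset (J m)) (hJm : ∀ m, (Jm m).Nonempty)
    (logPL logPLtilde : EuclideanSpace ℝ (Fin p) → ℝ)
    (hPL : logPL = fun β =>
      ∑ m, ((∑ j ∈ Jm m, ⟪β, x m j⟫) -
        Real.log (∑ S ∈ Finset.powersetCard (Jm m).card (Finset.univ : Finset (J m)),
          Real.exp (∑ j ∈ S, ⟪β, x m j⟫))))
    (hPLt : logPLtilde = fun β =>
      ∑ m, ((∑ j ∈ Jm m, ⟪β, x m j⟫) -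
        ((Jm m).card : ℝ) * Real.log (∑ j, Real.exp ⟪β, x m j⟫))) :
    ∀ β : EuclideanSpace ℝ (Fin p),
      DifferentiableAt ℝ logPL β ∧ DifferentiableAt ℝ logPLtilde β ∧
      ‖gradient logPL β - gradient logPLtilde β‖
        ≤ K * Real.exp (4 * K * ‖β‖) *
            ∑ m, ((Jm m).card : ℝ) ^ 2 * (((Jm m).card : ℝ) - 1)
              / (Fintype.card (J m) : ℝ) := by
  classical
  intro β
  set G1 : Fin n → EuclideanSpace ℝ (Fin p) := fun m =>
    (∑ S ∈ Finset.powersetCard (Jm m).card (Finset.univ : Finset (J m)),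
        Real.exp ⟪β, ∑ j ∈ S, x m j⟫)⁻¹ •
      ∑ S ∈ Finset.powersetCard (Jm m).card (Finset.univ : Finset (J m)),
        Real.exp ⟪β, ∑ j ∈ S, x m j⟫ • ∑ j ∈ S, x m j with hG1_def
  set G2 : Fin n → EuclideanSpace ℝ (Fin p) := fun m =>
    (∑ j, Real.exp ⟪β, x m j⟫)⁻¹ • ∑ j, Real.exp ⟪β, x m j⟫ • x m j with hG2_def
  have hPne : ∀ m, (Finset.powersetCard (Jm m).card (Finset.univ : Finset (J m))).Nonempty :=
    fun m => ⟨Jm m, Finset.mem_powersetCard.2 ⟨Finset.subset_univ _, rfl⟩⟩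
  have hg1 : ∀ m : Fin n, HasGradientAt (fun y : EuclideanSpace ℝ (Fin p) =>
      (∑ j ∈ Jm m, ⟪y, x m j⟫) -
        Real.log (∑ S ∈ Finset.powersetCard (Jm m).card (Finset.univ : Finset (J m)),
          Real.exp (∑ j ∈ S, ⟪y, x m j⟫)))
      ((∑ j ∈ Jm m, x m j) - G1 m) β := by
    intro m
    refine myGrad_sub (myGrad_sum _ _ _ fun j _ => myGrad_inner (x m j) β) ?_
    have hfun : (fun y : EuclideanSpace ℝ (Fin p) =>
        Real.log (∑ S ∈ Finset.powersetCard (Jm m).card (Finset.univ : Finset (J m)),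
          Real.exp (∑ j ∈ S, ⟪y, x m j⟫)))
        = fun y : EuclideanSpace ℝ (Fin p) =>
        Real.log (∑ S ∈ Finset.powersetCard (Jm m).card (Finset.univ : Finset (J m)),
          Real.exp ⟪y, ∑ j ∈ S, x m j⟫) := by
      funext y
      congr 1
      exact Finset.sum_congr rfl fun S _ => by rw [inner_sum]
    rw [hfun, hG1_def]
    exact myGrad_lse _ (hPne m) (fun S => ∑ j ∈ S, x m j) β
  have hg2 : ∀ m : Fin n, HasGradientAt (fun y : EuclideanSpace ℝ (Fin p) =>
      (∑ j ∈ Jm m, ⟪y, x m j⟫) -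
        ((Jm m).card : ℝ) * Real.log (∑ j, Real.exp ⟪y, x m j⟫))
      ((∑ j ∈ Jm m, x m j) - ((Jm m).card : ℝ) • G2 m) β := by
    intro m
    refine myGrad_sub (myGrad_sum _ _ _ fun j _ => myGrad_inner (x m j) β) ?_
    exact myGrad_const_mul _ (myGrad_lse Finset.univ Finset.univ_nonempty (x m) β)
  have hgPL : HasGradientAt logPL (∑ m, ((∑ j ∈ Jm m, x m j) - G1 m)) β := by
    rw [hPL]
    exact myGrad_sum _ _ _ fun m _ => hg1 m
  have hgPLt : HasGradientAt logPLtilde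
      (∑ m, ((∑ j ∈ Jm m, x m j) - ((Jm m).card : ℝ) • G2 m)) β := by
    rw [hPLt]
    exact myGrad_sum _ _ _ fun m _ => hg2 m
  refine ⟨hgPL.differentiableAt, hgPLt.differentiableAt, ?_⟩
  rw [hgPL.gradient, hgPLt.gradient, ← Finset.sum_sub_distrib]
  have hdiff : ∀ m : Fin n, ((∑ j ∈ Jm m, x m j) - G1 m)
      - ((∑ j ∈ Jm m, x m j) - ((Jm m).card : ℝ) • G2 m)
      = -(G1 m - ((Jm m).card : ℝ) • G2 m) := by
    intro m
    abel
  rw [Finset.sum_congr rfl fun m _ => hdiff m]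
  calc ‖∑ m, -(G1 m - ((Jm m).card : ℝ) • G2 m)‖
      ≤ ∑ m, ‖-(G1 m - ((Jm m).card : ℝ) • G2 m)‖ := norm_sum_le _ _
    _ = ∑ m, ‖G1 m - ((Jm m).card : ℝ) • G2 m‖ := by
        exact Finset.sum_congr rfl fun m _ => norm_neg _
    _ ≤ ∑ m, K * Real.exp (4 * K * ‖β‖) *
          (((Jm m).card : ℝ) ^ 2 * (((Jm m).card : ℝ) - 1) / (Fintype.card (J m) : ℝ)) := by
        refine Finset.sum_le_sum fun m _ => ?_
        exact key_bound K hK (x m) (hx m) (Jm m) (hJm m) β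
    _ = K * Real.exp (4 * K * ‖β‖) *
          ∑ m, ((Jm m).card : ℝ) ^ 2 * (((Jm m).card : ℝ) - 1) / (Fintype.card (J m) : ℝ) := by
        rw [Finset.mul_sum]
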